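/- arXiv:0810.0915 — 2 statements merged into one kernel-verified Lean document; each statement's English description precedes it below -/
import Mathlib

section
/- Define f(m,r,s₁,s₂) = ∑_{t=0}^{m+r-1} (-1)^t · (m+r-t) · C(r-s₁, t-s₁-s₂). If m, s₁, s₂ ≥ 0 are integers with s₁ + s₂ ≤ m, then f(m, m+1, s₁, s₂) = 0 unless (s₁,s₂) = (m,0), in which case f(m, m+1, m, 0) = (-1)^m. -/
def C (n k : ℤ) : ℤ := if 0 ≤ k ∧ k ≤ n then (n.toNat.choose k.toNat : ℤ) else 0

def f (m r s₁ s₂ : ℕ) : ℤ :=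
  ∑ t ∈ Finset.range (m + r), (-1 : ℤ) ^ t * ((m : ℤ) + r - t) * C ((r : ℤ) - s₁) ((t : ℤ) - s₁ - s₂)

lemma sumA (n : ℕ) (b : ℤ) :
    ∑ j ∈ Finset.range (n + 2), (-1:ℤ)^j * (b - j) * ((n+1).choose j : ℤ)
      = if n = 0 then 1 else 0 := by
  have h1 : ∑ j ∈ Finset.range (n + 2), (-1:ℤ)^j * (b - j) * ((n+1).choose j : ℤ)
      = b * (∑ j ∈ Finset.range (n + 2), (-1:ℤ)^j * ((n+1).choose j : ℤ))
        - ∑ j ∈ Finset.range (n + 2), (-1:ℤ)^j * j * ((n+1).choose j : ℤ) := by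
    rw [Finset.mul_sum, ← Finset.sum_sub_distrib]
    apply Finset.sum_congr rfl; intro j _; ring
  have h2 : ∑ j ∈ Finset.range (n + 2), (-1:ℤ)^j * j * ((n+1).choose j : ℤ)
      = -((n:ℤ)+1) * ∑ i ∈ Finset.range (n + 1), (-1:ℤ)^i * (n.choose i : ℤ) := by
    rw [Finset.sum_range_succ']
    simp only [Nat.cast_zero, mul_zero, zero_mul, add_zero]
    rw [Finset.mul_sum]
    apply Finset.sum_congr rfl; intro i _
    have := Nat.add_one_mul_choose_eq n i
    have h3 : ((n+1).choose (i+1) : ℤ) * (i+1) = ((n:ℤ)+1) * (n.choose i : ℤ) := by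
      exact_mod_cast congrArg (Nat.cast : ℕ → ℤ) this.symm
    push_cast
    linear_combination (-(-1:ℤ)^i) * h3
  rw [h1, h2, Int.alternating_sum_range_choose, Int.alternating_sum_range_choose]
  simp only [Nat.add_eq_zero, and_false, if_false, mul_zero, zero_sub]
  rcases eq_or_ne n 0 with h | h <;> simp [h]


lemma fval (m s₁ s₂ : ℕ) (h : s₁ + s₂ ≤ m) :
    f m (m+1) s₁ s₂ = (-1:ℤ)^(s₁+s₂) * (if s₁ = m then 1 else 0) := by
  have hs₁ : s₁ ≤ m := le_trans (Nat.le_add_right _ _) h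
  set a := s₁ + s₂ with ha
  set n := m - s₁ with hn
  set G : ℕ → ℤ := fun j => (-1:ℤ)^j * ((2*(m:ℤ)+1-a) - j) * (if j ≤ n+1 then ((n+1).choose j : ℤ) else 0) with hG
  have key : ∀ j : ℕ, (-1:ℤ) ^ (a + j) * ((m : ℤ) + (m+1:ℕ) - (a + j : ℕ)) * C (((m+1:ℕ) : ℤ) - s₁) (((a+j : ℕ) : ℤ) - s₁ - s₂) = (-1:ℤ)^a * G j := by
    intro j
    have hk : (((a+j : ℕ) : ℤ) - s₁ - s₂) = (j : ℤ) := by omega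
    have hN : (((m+1:ℕ) : ℤ) - s₁) = ((n:ℕ) : ℤ) + 1 := by
      push_cast [hn, Nat.cast_sub hs₁]; ring
    rw [hk, hN, hG]
    simp only [C]
    rcases le_or_gt j (n+1) with hj | hj
    · rw [if_pos ⟨Int.ofNat_nonneg j, by exact_mod_cast hj⟩, if_pos hj]
      have h1 : ((n:ℤ)+1).toNat = n+1 := by omega
      have h2 : ((j:ℤ)).toNat = j := by omega
      rw [h1, h2]
      push_cast
      ring_nf
    · rw [if_neg (by omega), if_neg (by omega)]
      ring
  have e1 : f m (m+1) s₁ s₂ = ∑ t ∈ Finset.Ico a (m + (m+1)), (-1 : ℤ) ^ t * ((m : ℤ) + (m+1:ℕ) - t) * C (((m+1:ℕ) : ℤ) - s₁) ((t : ℤ) - s₁ - s₂) := by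
    rw [f]
    rw [Finset.range_eq_Ico]
    apply (Finset.sum_subset (Finset.Ico_subset_Ico (Nat.zero_le a) le_rfl) ?_).symm
    intro t ht hta
    have ht1 : t < a := by
      simp only [Finset.mem_Ico] at ht hta; omega
    have : ¬ (0 ≤ (t : ℤ) - s₁ - s₂ ∧ (t : ℤ) - s₁ - s₂ ≤ ((m+1:ℕ) : ℤ) - s₁) := by
      push_neg; intro h'; exfalso; omega
    simp only [C, if_neg this, mul_zero]
  have e2 : f m (m+1) s₁ s₂ = (-1:ℤ)^a * ∑ j ∈ Finset.range (m + (m+1) - a), G j := by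
    rw [e1, Finset.sum_Ico_eq_sum_range, Finset.mul_sum]
    apply Finset.sum_congr rfl
    intro j _
    exact key j
  have e3 : ∑ j ∈ Finset.range (m + (m+1) - a), G j = ∑ j ∈ Finset.range (n + 2), G j := by
    rcases le_or_gt (m + (m+1) - a) (n+2) with hle | hlt
    · apply (Finset.sum_subset (Finset.range_subset_range.mpr hle) ?_)
      intro j hjt hj
      simp only [Finset.mem_range, not_lt] at hjt hj
      have haj : a + j = 2*m+1 := by omega
      have hcoef : (2*(m:ℤ)+1-a) - j = 0 := by omega
      rw [hG]
      simp only [hcoef, mul_zero, zero_mul]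
    · apply (Finset.sum_subset (Finset.range_subset_range.mpr (le_of_lt hlt)) ?_).symm
      intro j _ hj
      simp only [Finset.mem_range, not_lt] at hj
      rw [hG]
      simp only [if_neg (by omega : ¬ j ≤ n+1), mul_zero]
  have e4 : ∑ j ∈ Finset.range (n + 2), G j = if n = 0 then 1 else 0 := by
    rw [← sumA n (2*(m:ℤ)+1-a)]
    apply Finset.sum_congr rfl
    intro j hj
    simp only [Finset.mem_range] at hj
    rw [hG]
    simp only [if_pos (by omega : j ≤ n+1)]
  rw [e2, e3, e4]
  congr 1
  rcases eq_or_ne s₁ m with h' | h' <;> simp [h', hn]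
  omega

theorem stmt3 (m s₁ s₂ : ℕ) (h : s₁ + s₂ ≤ m) :
    ((s₁, s₂) ≠ (m, 0) → f m (m + 1) s₁ s₂ = 0) ∧ f m (m + 1) m 0 = (-1 : ℤ) ^ m := by
  constructor
  · intro hne
    rw [fval m s₁ s₂ h]
    have : s₁ ≠ m := by
      rintro rfl
      have : s₂ = 0 := by omega
      exact hne (by simp [this])
    simp [this]
  · rw [fval m m 0 (by omega)]
    simp
end

section
/- Define f(m,r,s₁,s₂) = ∑_{t=0}^{m+r-1} (-1)^t · (m+r-t) · C(r-s₁, t-s₁-s₂). If m, s₁, s₂ ≥ 0 are integers with s₁ + s₂ ≤ m, then f(m, m, s₁, s₂) = 0 unless (s₁,s₂) ∈ {(m,0), (m-1,1), (m-1,0)}; moreover f(m,m,m,0) = (-1)^m · m, f(m,m,m-1,1) = (-1)^m, and f(m,m,m-1,0) = (-1)^{m+1}. -/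
open Finset

lemma S1 (a : ℕ) : ∑ k ∈ range (a+1), ((-1:ℤ)^k * k * a.choose k) = if a = 1 then -1 else 0 := by
  cases a with
  | zero => simp
  | succ n =>
    rw [Finset.sum_range_succ']
    simp only [Nat.cast_zero, mul_zero, zero_mul, add_zero]
    have : ∀ i ∈ range (n+1), (-1:ℤ)^(i+1) * (↑(i+1)) * ((n+1).choose (i+1)) =
        (-(n+1)) * ((-1:ℤ)^i * n.choose i) := by
      intro i _
      have h := Nat.add_one_mul_choose_eq n i
      have h' : ((n+1) * n.choose i : ℤ) = ((n+1).choose (i+1)) * (i+1) := by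
        exact_mod_cast h
      rw [pow_succ]
      push_cast
      linear_combination ((-1:ℤ)^i) * h'
    rw [Finset.sum_congr rfl this, ← Finset.mul_sum, Int.alternating_sum_range_choose]
    by_cases hn : n = 0 <;> simp [hn]

lemma G (a : ℕ) (b : ℤ) : ∑ k ∈ range (a+1), (-1:ℤ)^k * (b - k) * a.choose k =
    (if a = 0 then b else 0) + (if a = 1 then 1 else 0) := by
  have : ∀ k ∈ range (a+1), (-1:ℤ)^k * (b - k) * a.choose k =
      b * ((-1:ℤ)^k * a.choose k) - ((-1:ℤ)^k * k * a.choose k) := by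
    intro k _; ring
  rw [Finset.sum_congr rfl this, Finset.sum_sub_distrib, ← Finset.mul_sum,
    Int.alternating_sum_range_choose, S1]
  by_cases h0 : a = 0
  · simp [h0]
  · by_cases h1 : a = 1 <;> simp [h0, h1]

lemma key (m s₁ s₂ : ℕ) (h : s₁ + s₂ ≤ m) :
    f m m s₁ s₂ = (-1:ℤ)^(s₁+s₂) *
      ((if m - s₁ = 0 then ((m:ℤ) + m - s₁ - s₂) else 0) + (if m - s₁ = 1 then 1 else 0)) := by
  have hs₁ : s₁ ≤ m := le_trans (Nat.le_add_right _ _) h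
  obtain ⟨c, hc⟩ : ∃ c, s₁ + s₂ = c := ⟨_, rfl⟩
  obtain ⟨a, ha⟩ : ∃ a, m - s₁ = a := ⟨_, rfl⟩
  obtain ⟨n₂, hn⟩ : ∃ n, m + m + 1 - (c + (a + 1)) = n := ⟨_, rfl⟩
  have hsplit : m + m + 1 = c + ((a + 1) + n₂) := by omega
  have hstep : f m m s₁ s₂ = ∑ t ∈ Finset.range (c + ((a+1) + n₂)),
      (-1:ℤ)^t * ((m:ℤ) + m - t) * C ((m:ℤ) - s₁) ((t:ℤ) - s₁ - s₂) := by
    rw [← hsplit, Finset.sum_range_succ, f]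
    have h0 : ((m:ℤ) + m - (↑(m+m) : ℤ)) = 0 := by push_cast; ring
    rw [h0]; ring
  rw [hstep, Finset.sum_range_add, Finset.sum_range_add]
  have h1 : ∑ t ∈ Finset.range c,
      (-1:ℤ)^t * ((m:ℤ)+m-t) * C ((m:ℤ)-s₁) ((t:ℤ)-s₁-s₂) = 0 := by
    apply Finset.sum_eq_zero
    intro t ht
    rw [Finset.mem_range] at ht
    have hz : C ((m:ℤ)-s₁) ((t:ℤ)-s₁-s₂) = 0 := by
      rw [C, if_neg]; rintro ⟨h1, -⟩; omega
    rw [hz, mul_zero]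
  have h3 : ∑ i ∈ Finset.range n₂,
      (-1:ℤ)^(c + ((a+1)+i)) * ((m:ℤ)+m-(↑(c + ((a+1)+i)):ℤ)) *
        C ((m:ℤ)-s₁) ((↑(c + ((a+1)+i)):ℤ)-s₁-s₂) = 0 := by
    apply Finset.sum_eq_zero
    intro i hi
    have hz : C ((m:ℤ)-s₁) ((↑(c + ((a+1)+i)):ℤ)-s₁-s₂) = 0 := by
      rw [C, if_neg]; rintro ⟨-, h2⟩; omega
    rw [hz, mul_zero]
  have h2 : ∀ k ∈ Finset.range (a + 1),
      (-1:ℤ)^(c+k) * ((m:ℤ)+m-(↑(c+k):ℤ)) * C ((m:ℤ)-s₁) ((↑(c+k):ℤ)-s₁-s₂) =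
      (-1:ℤ)^(s₁+s₂) * ((-1:ℤ)^k * (((m:ℤ)+m-s₁-s₂) - k) * (a.choose k)) := by
    intro k hk
    rw [Finset.mem_range] at hk
    have e1 : ((m:ℤ)-s₁) = (a : ℤ) := by omega
    have e2 : ((↑(c+k):ℤ)-s₁-s₂) = (k:ℤ) := by omega
    have hC : C ((m:ℤ)-s₁) ((↑(c+k):ℤ)-s₁-s₂) = (a.choose k : ℤ) := by
      rw [e1, e2, C, if_pos ⟨by positivity, by exact_mod_cast Nat.le_of_lt_succ hk⟩]
      simp
    rw [hC, ← hc, pow_add]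
    push_cast
    ring
  rw [h1, h3, Finset.sum_congr rfl h2, ← Finset.mul_sum, G a ((m:ℤ)+m-s₁-s₂), ha]
  ring

theorem stmt4 (m s₁ s₂ : ℕ) (h : s₁ + s₂ ≤ m) :
    (((s₁, s₂) ≠ (m, 0) ∧ (s₁, s₂) ≠ (m - 1, 1) ∧ (s₁, s₂) ≠ (m - 1, 0)) → f m m s₁ s₂ = 0) ∧
    (1 ≤ m →
      f m m m 0 = (-1 : ℤ) ^ m * m ∧
      f m m (m - 1) 1 = (-1 : ℤ) ^ m ∧
      f m m (m - 1) 0 = (-1 : ℤ) ^ (m + 1)) := by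
  constructor
  · rintro ⟨hne1, hne2, hne3⟩
    rw [key m s₁ s₂ h]
    have ha0 : m - s₁ ≠ 0 := by
      intro h0
      have e1 : s₁ = m := by omega
      have e2 : s₂ = 0 := by omega
      exact hne1 (by rw [e1, e2])
    have ha1 : m - s₁ ≠ 1 := by
      intro h0
      have e1 : s₁ = m - 1 := by omega
      have e2 : s₂ = 0 ∨ s₂ = 1 := by omega
      rcases e2 with e2 | e2
      · exact hne3 (by rw [e1, e2])
      · exact hne2 (by rw [e1, e2])
    rw [if_neg ha0, if_neg ha1]
    ring
  · intro hm
    refine ⟨?_, ?_, ?_⟩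
    · rw [key m m 0 (by omega)]
      rw [if_pos (by omega), if_neg (by omega)]
      push_cast
      ring
    · rw [key m (m-1) 1 (by omega)]
      rw [if_neg (by omega), if_pos (by omega), show m - 1 + 1 = m by omega]
      ring
    · rw [key m (m-1) 0 (by omega)]
      rw [if_neg (by omega), if_pos (by omega), show m + 1 = (m - 1) + 2 by omega, pow_add]
      ring
end
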